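/- Under the i.i.d. equivariant selection setup, let j ≠ k be indices in {1, …, n} and A, B ⊆ {1, …, n} with j ∈ A and k ∈ B, and set W = A ∩ B. (i) If j ∈ W, k ∉ W and |W| = ℓ ≥ 1, then E[X_j^A · X_k^B] ≤ E[Q_W · (1 − Q_W)] / (ℓ·(n − ℓ)). (ii) If W = ∅, then E[X_j^A · X_k^B] = μ²/n², where μ = P[f(t) ≠ ⊥]. -/

import Mathlib

set_option linter.unusedSectionVars false
set_option linter.unnecessarySimpa false

open MeasureTheory
open scoped Classical

/-- A selection function `f : Sⁿ → {1,…,n} ∪ {⊥}` is permutation-equivariant if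
`f(s ∘ σ) = σ⁻¹(f(s))` (with `⊥ ↦ ⊥`). -/
def PermEquivariant {S : Type*} {n : ℕ} (f : (Fin n → S) → Option (Fin n)) : Prop :=
  ∀ (σ : Equiv.Perm (Fin n)) (s : Fin n → S),
    f (fun i => s (σ i)) = Option.map σ.symm (f s)

/-- The σ-algebra generated by the coordinates in the window `W`. -/
def windowSigma {S : Type*} [MeasurableSpace S] (n : ℕ) (W : Finset (Fin n)) :
    MeasurableSpace (Fin n → S) :=
  ⨆ i ∈ W, MeasurableSpace.comap (fun s : Fin n → S => s i) inferInstance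

/-- `Q_W = P[f(t) ∈ W | t_W]`, the conditional probability that `f` selects an index in `W`
given the coordinates in `W`, under the i.i.d. product measure. -/
noncomputable def Qwin {S : Type*} [MeasurableSpace S] (D : Measure S) (n : ℕ)
    (f : (Fin n → S) → Option (Fin n)) (W : Finset (Fin n)) : (Fin n → S) → ℝ :=
  (Measure.pi fun _ : Fin n => D)[(fun s => if ∃ j ∈ W, f s = some j then (1 : ℝ) else 0) |
    windowSigma n W]

/-- `X_j^W = P[f(t) = j | t_W]`, the windowed estimator with window `W`. -/
noncomputable def Xwin {S : Type*} [MeasurableSpace S] (D : Measure S) (n : ℕ)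
    (f : (Fin n → S) → Option (Fin n)) (j : Fin n) (W : Finset (Fin n)) : (Fin n → S) → ℝ :=
  (Measure.pi fun _ : Fin n => D)[(fun s => if f s = some j then (1 : ℝ) else 0) |
    windowSigma n W]


namespace CrossAux

variable {S : Type*} [MeasurableSpace S] {n : ℕ}

/-- Merge two vectors: coordinates in `W` from `s`, the rest from `u`. -/
def wmerge (W : Finset (Fin n)) (s u : Fin n → S) : Fin n → S :=
  fun i => if i ∈ W then s i else u i

lemma measurable_wmerge (W : Finset (Fin n)) :
    Measurable (fun p : (Fin n → S) × (Fin n → S) => wmerge W p.1 p.2) := by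
  apply measurable_pi_lambda
  intro i
  by_cases h : i ∈ W
  · simpa [wmerge, h, Function.comp_def] using (measurable_pi_apply i).comp measurable_fst
  · simpa [wmerge, h, Function.comp_def] using (measurable_pi_apply i).comp measurable_snd

lemma measurable_wmerge_right (W : Finset (Fin n)) (s : Fin n → S) :
    Measurable (fun u => wmerge W s u) :=
  (measurable_wmerge W).comp (measurable_const.prodMk measurable_id)

lemma wmerge_empty (s u : Fin n → S) : wmerge (∅ : Finset (Fin n)) s u = u := by
  funext i; simp [wmerge]

variable (D : Measure S) [IsProbabilityMeasure D]

local notation "μp" => (Measure.pi fun _ : Fin n => D)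

/-- Bounded-by-one measurable functions. -/
def B1 (g : (Fin n → S) → ℝ) : Prop := Measurable g ∧ ∀ x, |g x| ≤ 1

lemma integrable_of_bdd {α : Type*} [MeasurableSpace α] (ν : Measure α) [IsFiniteMeasure ν]
    {g : α → ℝ} (hg : Measurable g) (hb : ∀ x, |g x| ≤ 1) : Integrable g ν := by
  refine (integrable_const (1 : ℝ)).mono' hg.aestronglyMeasurable ?_
  exact Filter.Eventually.of_forall fun x => by simpa [Real.norm_eq_abs] using hb x

lemma B1.integrable {g : (Fin n → S) → ℝ} (hg : B1 (n := n) g) : Integrable g μp :=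
  integrable_of_bdd _ hg.1 hg.2

lemma B1.mul {g h : (Fin n → S) → ℝ} (hg : B1 (n := n) g) (hh : B1 (n := n) h) :
    B1 (n := n) (fun x => g x * h x) := by
  refine ⟨hg.1.mul hh.1, fun x => ?_⟩
  rw [abs_mul]
  calc |g x| * |h x| ≤ 1 * 1 :=
        mul_le_mul (hg.2 x) (hh.2 x) (abs_nonneg _) zero_le_one
    _ = 1 := one_mul 1

/-- The merge map is measure preserving from `μp × μp` to `μp`. -/
lemma mergeMP (W : Finset (Fin n)) :
    MeasurePreserving (fun p : (Fin n → S) × (Fin n → S) => wmerge W p.1 p.2)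
      ((Measure.pi fun _ : Fin n => D).prod (Measure.pi fun _ : Fin n => D))
      (Measure.pi fun _ : Fin n => D) := by
  refine ⟨measurable_wmerge W, ?_⟩
  refine (Measure.pi_eq fun t ht => ?_).symm
  rw [Measure.map_apply (measurable_wmerge W) (MeasurableSet.univ_pi fun i => ht i)]
  have hpre : (fun p : (Fin n → S) × (Fin n → S) => wmerge W p.1 p.2) ⁻¹'
      (Set.pi Set.univ t) =
      (Set.pi Set.univ fun i => if i ∈ W then t i else Set.univ) ×ˢ
      (Set.pi Set.univ fun i => if i ∈ W then Set.univ else t i) := by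
    ext p
    simp only [Set.mem_preimage, Set.mem_pi, Set.mem_univ, forall_true_left, Set.mem_prod]
    constructor
    · intro h
      constructor <;> intro i <;> by_cases hi : i ∈ W <;>
        simpa [wmerge, hi] using (by simpa [wmerge, hi] using h i)
    · rintro ⟨h1, h2⟩ i
      by_cases hi : i ∈ W
      · simpa [wmerge, hi] using h1 i
      · simpa [wmerge, hi] using h2 i
  rw [hpre, Measure.prod_prod, Measure.pi_pi, Measure.pi_pi]
  have : ∀ i, (D (if i ∈ W then t i else Set.univ)) * (D (if i ∈ W then Set.univ else t i))
      = D (t i) := by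
    intro i; by_cases hi : i ∈ W <;> simp [hi, measure_univ]
  rw [← Finset.prod_mul_distrib]
  exact Finset.prod_congr rfl fun i _ => this i

/-- Permuting coordinates preserves the i.i.d. product measure. -/
lemma permMP (σ : Equiv.Perm (Fin n)) :
    MeasurePreserving (fun (s : Fin n → S) (i : Fin n) => s (σ i))
      (Measure.pi fun _ : Fin n => D) (Measure.pi fun _ : Fin n => D) := by
  have hmeas : Measurable (fun (s : Fin n → S) (i : Fin n) => s (σ i)) :=
    measurable_pi_lambda _ fun i => measurable_pi_apply (σ i)
  refine ⟨hmeas, ?_⟩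
  refine (Measure.pi_eq fun t ht => ?_).symm
  rw [Measure.map_apply hmeas (MeasurableSet.univ_pi fun i => ht i)]
  have hpre : (fun (s : Fin n → S) (i : Fin n) => s (σ i)) ⁻¹' (Set.pi Set.univ t)
      = Set.pi Set.univ fun i => t (σ.symm i) := by
    ext s
    simp only [Set.mem_preimage, Set.mem_pi, Set.mem_univ, forall_true_left]
    constructor
    · intro h i; simpa using h (σ.symm i)
    · intro h i; simpa using h (σ i)
  rw [hpre, Measure.pi_pi]
  exact Equiv.prod_comp σ.symm fun i => D (t i)

/-- Integrate out the coordinates outside `W`. -/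
noncomputable def phi (D : Measure S) (W : Finset (Fin n)) (g : (Fin n → S) → ℝ) :
    (Fin n → S) → ℝ :=
  fun s => ∫ u, g (wmerge W s u) ∂(Measure.pi fun _ : Fin n => D)

lemma B1.phi {g : (Fin n → S) → ℝ} (W : Finset (Fin n)) (hg : B1 (n := n) g) :
    B1 (n := n) (phi D W g) := by
  constructor
  · have h1 : StronglyMeasurable (fun p : (Fin n → S) × (Fin n → S) => g (wmerge W p.1 p.2)) :=
      (hg.1.comp (measurable_wmerge W)).stronglyMeasurable
    exact h1.integral_prod_right'.measurable
  · intro s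
    have h := norm_integral_le_of_norm_le_const (μ := Measure.pi fun _ : Fin n => D)
      (f := fun u => g (wmerge W s u)) (C := 1)
      (Filter.Eventually.of_forall fun u => by simpa [Real.norm_eq_abs] using hg.2 _)
    simpa [Real.norm_eq_abs, CrossAux.phi] using h

lemma phi_nonneg {g : (Fin n → S) → ℝ} (W : Finset (Fin n)) (hg : ∀ x, 0 ≤ g x)
    (s : Fin n → S) : 0 ≤ phi D W g s :=
  integral_nonneg fun u => hg _

lemma phi_congr_of_agree {g : (Fin n → S) → ℝ} (W : Finset (Fin n)) {s s' : Fin n → S}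
    (h : ∀ i ∈ W, s i = s' i) : phi D W g s = phi D W g s' := by
  unfold phi
  congr 1
  funext u
  congr 1
  funext i
  by_cases hi : i ∈ W <;> simp [wmerge, hi, h i]

/-- Fundamental identity: re-randomizing the coordinates outside `W` does not change
the integral. -/
lemma integral_phi {g : (Fin n → S) → ℝ} (W : Finset (Fin n)) (hg : B1 (n := n) g) :
    ∫ s, phi D W g s ∂(Measure.pi fun _ : Fin n => D) = ∫ s, g s ∂(Measure.pi fun _ : Fin n => D) := by
  have hMP := mergeMP D W
  have hint : Integrable (fun p : (Fin n → S) × (Fin n → S) => g (wmerge W p.1 p.2))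
      ((Measure.pi fun _ : Fin n => D).prod (Measure.pi fun _ : Fin n => D)) :=
    integrable_of_bdd _ (hg.1.comp (measurable_wmerge W)) fun p => hg.2 _
  have h1 := integral_map (μ := (Measure.pi fun _ : Fin n => D).prod (Measure.pi fun _ : Fin n => D))
    hMP.measurable.aemeasurable
    (f := g) (by rw [hMP.map_eq]; exact hg.1.aestronglyMeasurable)
  rw [hMP.map_eq] at h1
  rw [h1, integral_prod _ hint]
  rfl

/-- Change of variables by a coordinate permutation. -/
lemma integral_perm {g : (Fin n → S) → ℝ} (σ : Equiv.Perm (Fin n)) (hg : Measurable g) :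
    ∫ s, g s ∂(Measure.pi fun _ : Fin n => D)
      = ∫ s, g (fun i => s (σ i)) ∂(Measure.pi fun _ : Fin n => D) := by
  have hMP := permMP (S := S) D σ
  have h1 := integral_map (μ := Measure.pi fun _ : Fin n => D) hMP.measurable.aemeasurable
    (f := g) (by rw [hMP.map_eq]; exact hg.aestronglyMeasurable)
  rw [hMP.map_eq] at h1
  exact h1

/-- Tower property: integrating a `phi A`-average over the coordinates outside `W ⊆ A`
yields the `phi W`-average. -/
lemma phi_tower {g : (Fin n → S) → ℝ} {W A : Finset (Fin n)} (hWA : W ⊆ A)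
    (hg : B1 (n := n) g) (s : Fin n → S) :
    ∫ u, phi D A g (wmerge W s u) ∂(Measure.pi fun _ : Fin n => D) = phi D W g s := by
  have hk : B1 (n := n) (fun t => g (wmerge W s t)) :=
    ⟨hg.1.comp (measurable_wmerge_right W s), fun t => hg.2 _⟩
  have key : ∀ u t : Fin n → S, wmerge A (wmerge W s u) t = wmerge W s (wmerge A u t) := by
    intro u t
    funext i
    by_cases hiW : i ∈ W
    · have hiA : i ∈ A := hWA hiW
      simp [wmerge, hiW, hiA]
    · by_cases hiA : i ∈ A <;> simp [wmerge, hiW, hiA]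
  calc ∫ u, phi D A g (wmerge W s u) ∂(Measure.pi fun _ : Fin n => D)
      = ∫ u, phi D A (fun t => g (wmerge W s t)) u ∂(Measure.pi fun _ : Fin n => D) := by
        unfold phi
        congr 1
        funext u
        congr 1
        funext t
        rw [key]
    _ = ∫ t, g (wmerge W s t) ∂(Measure.pi fun _ : Fin n => D) := integral_phi D A hk
    _ = phi D W g s := rfl

/-- Independence: if `F` depends only on the `C`-coordinates and `G` only on the rest,
the integral of the product factorizes. -/
lemma integral_mul_of_indep {F G : (Fin n → S) → ℝ} (C : Finset (Fin n))
    (hF : B1 (n := n) F) (hG : B1 (n := n) G)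
    (hFC : ∀ u v, F (wmerge C u v) = F u) (hGC : ∀ u v, G (wmerge C u v) = G v) :
    ∫ x, F x * G x ∂(Measure.pi fun _ : Fin n => D)
      = (∫ x, F x ∂(Measure.pi fun _ : Fin n => D)) * ∫ x, G x ∂(Measure.pi fun _ : Fin n => D) := by
  have hFG : B1 (n := n) (fun x => F x * G x) := hF.mul hG
  rw [← integral_phi D C hFG]
  have : ∀ u, phi D C (fun x => F x * G x) u
      = F u * ∫ x, G x ∂(Measure.pi fun _ : Fin n => D) := by
    intro u
    unfold phi
    calc ∫ v, F (wmerge C u v) * G (wmerge C u v) ∂(Measure.pi fun _ : Fin n => D)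
        = ∫ v, F u * G v ∂(Measure.pi fun _ : Fin n => D) := by
          congr 1; funext v; rw [hFC, hGC]
      _ = F u * ∫ v, G v ∂(Measure.pi fun _ : Fin n => D) := integral_const_mul _ _
  rw [show (fun u => phi D C (fun x => F x * G x) u) = fun u =>
    F u * ∫ x, G x ∂(Measure.pi fun _ : Fin n => D) from funext this]
  exact integral_mul_const _ _
lemma windowSigma_le (W : Finset (Fin n)) :
    windowSigma (S := S) n W ≤ MeasurableSpace.pi := by
  refine iSup₂_le fun i _ => ?_
  exact (measurable_pi_apply (a := i)).comap_le

/-- The window σ-algebra is the comap of the restriction map. -/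
lemma windowSigma_eq (W : Finset (Fin n)) :
    windowSigma (S := S) n W
      = MeasurableSpace.comap (fun (s : Fin n → S) (i : {i // i ∈ W}) => s i.1)
          MeasurableSpace.pi := by
  unfold windowSigma
  rw [MeasurableSpace.pi, MeasurableSpace.comap_iSup]
  rw [iSup_subtype]
  refine le_antisymm (iSup₂_le fun i hi => ?_) (iSup₂_le fun i hi => ?_)
  · refine le_iSup_of_le i (le_iSup_of_le hi ?_)
    rw [MeasurableSpace.comap_comp]
    exact le_rfl
  · refine le_iSup_of_le i (le_iSup_of_le hi ?_)
    rw [MeasurableSpace.comap_comp]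
    exact le_rfl

lemma wmerge_restrict_eq (W : Finset (Fin n)) (s u : Fin n → S) (i : {i // i ∈ W}) :
    wmerge W s u i.1 = s i.1 := by
  simp [wmerge, i.2]

/-- `phi D W g` is measurable with respect to the window σ-algebra. -/
lemma phi_window_measurable {g : (Fin n → S) → ℝ} (W : Finset (Fin n)) (hg : Measurable g) :
    Measurable[windowSigma (S := S) n W] (phi D W g) := by
  rw [windowSigma_eq]
  have hres : Measurable[MeasurableSpace.comap
      (fun (s : Fin n → S) (i : {i // i ∈ W}) => s i.1) MeasurableSpace.pi]
      (fun (s : Fin n → S) (i : {i // i ∈ W}) => s i.1) :=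
    Measurable.of_comap_le le_rfl
  have hΦmeas : Measurable (fun (p : ({i // i ∈ W} → S) × (Fin n → S)) =>
      g (fun i => if h : i ∈ W then p.1 ⟨i, h⟩ else p.2 i)) := by
    refine hg.comp (measurable_pi_lambda _ fun i => ?_)
    by_cases h : i ∈ W
    · simpa [h, Function.comp_def] using (measurable_pi_apply (⟨i, h⟩ : {i // i ∈ W})).comp measurable_fst
    · simpa [h, Function.comp_def] using (measurable_pi_apply i).comp measurable_snd
  have hΦ : Measurable (fun (y : {i // i ∈ W} → S) =>
      ∫ u, g (fun i => if h : i ∈ W then y ⟨i, h⟩ else u i) ∂(Measure.pi fun _ : Fin n => D)) :=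
    hΦmeas.stronglyMeasurable.integral_prod_right'.measurable
  have heq : phi D W g = (fun (y : {i // i ∈ W} → S) =>
      ∫ u, g (fun i => if h : i ∈ W then y ⟨i, h⟩ else u i) ∂(Measure.pi fun _ : Fin n => D))
      ∘ (fun (s : Fin n → S) (i : {i // i ∈ W}) => s i.1) := by
    funext s
    unfold phi
    show (∫ u, g (wmerge W s u) ∂(Measure.pi fun _ : Fin n => D))
      = ∫ u, g (fun i => if h : i ∈ W then s i else u i) ∂(Measure.pi fun _ : Fin n => D)
    refine integral_congr_ae (Filter.Eventually.of_forall fun u => ?_)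
    exact congrArg g (funext fun i => by by_cases h : i ∈ W <;> simp [wmerge, h])
  rw [heq]
  exact hΦ.comp hres

/-- The conditional expectation onto the window σ-algebra is `phi D W`. -/
lemma condexp_eq_phi {g : (Fin n → S) → ℝ} (W : Finset (Fin n)) (hg : B1 (n := n) g) :
    (Measure.pi fun _ : Fin n => D)[g | windowSigma n W] =ᵐ[Measure.pi fun _ : Fin n => D]
      phi D W g := by
  have hm := windowSigma_le (S := S) (n := n) W
  refine (ae_eq_condExp_of_forall_setIntegral_eq hm (B1.integrable D hg) ?_ ?_ ?_).symm
  · intro E _ _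
    exact ((hg.phi D W).integrable D).integrableOn
  · intro E hE _
    -- E is measurable wrt comap of restriction
    rw [windowSigma_eq] at hE
    obtain ⟨E', hE'meas, hE'⟩ := hE
    have hEpi : MeasurableSet E := hm E (by rw [windowSigma_eq]; exact ⟨E', hE'meas, hE'⟩)
    have hind : B1 (n := n) (fun s => E.indicator g s) := by
      refine ⟨hg.1.indicator hEpi, fun x => ?_⟩
      by_cases hx : x ∈ E <;> simp [Set.indicator_apply, hx, hg.2 x]
    have hkey : ∀ s, phi D W (fun x => E.indicator g x) s = E.indicator (phi D W g) s := by
      intro s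
      have hmem : ∀ u, (wmerge W s u ∈ E ↔ s ∈ E) := by
        intro u
        rw [← hE']
        simp only [Set.mem_preimage]
        rw [show (fun (i : {i // i ∈ W}) => wmerge W s u i.1)
          = (fun (i : {i // i ∈ W}) => s i.1) from funext fun i => by simp [wmerge, i.2]]
      by_cases hs : s ∈ E
      · rw [Set.indicator_of_mem hs]
        unfold phi
        refine integral_congr_ae (Filter.Eventually.of_forall fun u => ?_)
        exact Set.indicator_of_mem ((hmem u).2 hs) g
      · rw [Set.indicator_of_notMem hs]
        unfold phi
        have hz : ∀ u, E.indicator g (wmerge W s u) = 0 := fun u =>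
          Set.indicator_of_notMem (fun h => hs ((hmem u).1 h)) g
        calc (∫ u, E.indicator g (wmerge W s u) ∂(Measure.pi fun _ : Fin n => D))
            = ∫ _u, (0 : ℝ) ∂(Measure.pi fun _ : Fin n => D) := by
              refine integral_congr_ae (Filter.Eventually.of_forall fun u => hz u)
          _ = 0 := integral_zero _ _
    calc ∫ x in E, phi D W g x ∂(Measure.pi fun _ : Fin n => D)
        = ∫ x, E.indicator (phi D W g) x ∂(Measure.pi fun _ : Fin n => D) :=
          (integral_indicator hEpi).symm
      _ = ∫ x, phi D W (fun y => E.indicator g y) x ∂(Measure.pi fun _ : Fin n => D) := by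
          congr 1; funext x; rw [hkey]
      _ = ∫ x, E.indicator g x ∂(Measure.pi fun _ : Fin n => D) := integral_phi D W hind
      _ = ∫ x in E, g x ∂(Measure.pi fun _ : Fin n => D) := integral_indicator hEpi
  · exact StronglyMeasurable.aestronglyMeasurable
      ((phi_window_measurable D W hg.1).stronglyMeasurable)
/-- Core identity: the cross integral over windows `A`, `B` collapses to the common
window `W = A ∩ B`. -/
lemma core_identity {g h : (Fin n → S) → ℝ} {A B : Finset (Fin n)}
    (hg : B1 (n := n) g) (hh : B1 (n := n) h) :
    ∫ s, phi D A g s * phi D B h s ∂(Measure.pi fun _ : Fin n => D)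
      = ∫ s, phi D (A ∩ B) g s * phi D (A ∩ B) h s ∂(Measure.pi fun _ : Fin n => D) := by
  set W := A ∩ B with hWdef
  have hgA := B1.phi D A hg
  have hhB := B1.phi D B hh
  have hK : B1 (n := n) (fun x => phi D A g x * phi D B h x) := hgA.mul hhB
  rw [← integral_phi D W hK]
  refine integral_congr_ae (Filter.Eventually.of_forall fun s => ?_)
  have hF : ∀ u v, phi D A g (wmerge W s (wmerge A u v)) = phi D A g (wmerge W s u) := by
    intro u v
    refine phi_congr_of_agree D A fun i hi => ?_
    by_cases hiW : i ∈ W <;> simp [wmerge, hiW, hi]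
  have hG : ∀ u v, phi D B h (wmerge W s (wmerge A u v)) = phi D B h (wmerge W s v) := by
    intro u v
    refine phi_congr_of_agree D B fun i hi => ?_
    by_cases hiW : i ∈ W
    · simp [wmerge, hiW]
    · have hiA : i ∉ A := fun hiA => hiW (Finset.mem_inter.2 ⟨hiA, hi⟩)
      simp [wmerge, hiW, hiA]
  have hFB : B1 (n := n) (fun u => phi D A g (wmerge W s u)) :=
    ⟨hgA.1.comp (measurable_wmerge_right W s), fun u => hgA.2 _⟩
  have hGB : B1 (n := n) (fun u => phi D B h (wmerge W s u)) :=
    ⟨hhB.1.comp (measurable_wmerge_right W s), fun u => hhB.2 _⟩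
  calc phi D W (fun x => phi D A g x * phi D B h x) s
      = ∫ u, phi D A g (wmerge W s u) * phi D B h (wmerge W s u)
          ∂(Measure.pi fun _ : Fin n => D) := rfl
    _ = (∫ u, phi D A g (wmerge W s u) ∂(Measure.pi fun _ : Fin n => D))
        * ∫ u, phi D B h (wmerge W s u) ∂(Measure.pi fun _ : Fin n => D) :=
        integral_mul_of_indep D A hFB hGB hF hG
    _ = phi D W g s * phi D W h s := by
        rw [phi_tower D (Finset.inter_subset_left) hg s,
          phi_tower D (Finset.inter_subset_right) hh s]

/-- Equivariance of `phi` under a permutation stabilizing the window. -/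
lemma phi_perm {g : (Fin n → S) → ℝ} (W : Finset (Fin n)) (σ : Equiv.Perm (Fin n))
    (hσW : ∀ i, i ∈ W ↔ σ i ∈ W) (hg : Measurable g) (s : Fin n → S) :
    phi D W g (fun i => s (σ i)) = phi D W (fun x => g (fun i => x (σ i))) s := by
  unfold phi
  have hchg := integral_perm D σ
    (g := fun u => g (wmerge W (fun i => s (σ i)) u)) (hg.comp (measurable_wmerge_right _ _))
  rw [hchg]
  refine integral_congr_ae (Filter.Eventually.of_forall fun u => ?_)
  refine congrArg g (funext fun i => ?_)
  by_cases hi : i ∈ W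
  · have : σ i ∈ W := (hσW i).1 hi
    simp [wmerge, hi, this]
  · have : σ i ∉ W := fun hc => hi ((hσW i).2 hc)
    simp [wmerge, hi, this]
section Selection

variable (f : (Fin n → S) → Option (Fin n))

/-- Indicator that `f` selects `j`. -/
def gdel (j : Fin n) : (Fin n → S) → ℝ := fun s => if f s = some j then 1 else 0

/-- Indicator that `f` selects an element of `W`. -/
def qind (W : Finset (Fin n)) : (Fin n → S) → ℝ :=
  fun s => if ∃ j ∈ W, f s = some j then 1 else 0

variable (hfmeas : ∀ o : Option (Fin n), MeasurableSet {s : Fin n → S | f s = o})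

omit [MeasurableSpace S] in
lemma gdel_nonneg (j : Fin n) (s : Fin n → S) : 0 ≤ gdel f j s := by
  unfold gdel; split_ifs <;> norm_num

include hfmeas in
lemma B1_gdel (j : Fin n) : B1 (n := n) (gdel f j) := by
  refine ⟨?_, fun s => ?_⟩
  · exact Measurable.ite (hfmeas (some j)) measurable_const measurable_const
  · unfold gdel; split_ifs <;> norm_num

include hfmeas in
lemma B1_qind (W : Finset (Fin n)) : B1 (n := n) (qind f W) := by
  refine ⟨?_, fun s => ?_⟩
  · have hset : MeasurableSet {s : Fin n → S | ∃ j ∈ W, f s = some j} := by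
      have : {s : Fin n → S | ∃ j ∈ W, f s = some j}
          = ⋃ j ∈ (W : Set (Fin n)), {s : Fin n → S | f s = some j} := by
        ext s; simp
      rw [this]
      exact MeasurableSet.biUnion W.countable_toSet fun j _ => hfmeas (some j)
    exact Measurable.ite hset measurable_const measurable_const
  · unfold qind; split_ifs <;> norm_num

omit [MeasurableSpace S] in
lemma sum_gdel (W : Finset (Fin n)) (s : Fin n → S) :
    ∑ j' ∈ W, gdel f j' s = qind f W s := by
  unfold gdel qind
  rcases hfs : f s with _ | m
  · simp
  · simp only [hfs, Option.some.injEq]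
    rw [Finset.sum_ite_eq W m (fun _ => (1 : ℝ))]
    by_cases hm : m ∈ W <;> simp [hm]

omit [MeasurableSpace S] in
lemma qind_compl_le (W : Finset (Fin n)) (s : Fin n → S) :
    qind f (Finset.univ \ W) s ≤ 1 - qind f W s := by
  unfold qind
  rcases hfs : f s with _ | m
  · simp
  · simp only [hfs, Option.some.injEq, exists_eq_right, Finset.mem_sdiff, Finset.mem_univ,
      true_and]
    by_cases hm : m ∈ W <;> simp [hm]

omit [MeasurableSpace S] in
lemma sum_gdel_univ (s : Fin n → S) :
    ∑ j' : Fin n, gdel f j' s = if f s ≠ none then 1 else 0 := by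
  rw [sum_gdel]
  unfold qind
  rcases hfs : f s with _ | m <;> simp [hfs]

variable (hequiv : PermEquivariant f)

include hequiv in
omit [MeasurableSpace S] in
lemma gdel_comp_perm (σ : Equiv.Perm (Fin n)) (j : Fin n) :
    (fun s : Fin n → S => gdel f j (fun i => s (σ i))) = gdel f (σ j) := by
  funext s
  unfold gdel
  rw [hequiv σ s]
  rcases hfs : f s with _ | m
  · simp
  · simp [Equiv.symm_apply_eq]

include hfmeas in
/-- Integral of the selection indicator. -/
lemma integral_gdel (j : Fin n) :
    ∫ s, gdel f j s ∂(Measure.pi fun _ : Fin n => D)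
      = ((Measure.pi fun _ : Fin n => D) {s | f s = some j}).toReal := by
  have : gdel f j = Set.indicator {s : Fin n → S | f s = some j} (fun _ => (1 : ℝ)) := by
    funext s
    unfold gdel
    by_cases h : f s = some j <;> simp [Set.indicator_apply, h]
  rw [this, integral_indicator_const _ (hfmeas (some j))]
  simp [Measure.real]

include hequiv hfmeas in
lemma integral_gdel_eq (i i' : Fin n) :
    ∫ s, gdel f i s ∂(Measure.pi fun _ : Fin n => D)
      = ∫ s, gdel f i' s ∂(Measure.pi fun _ : Fin n => D) := by
  have h := integral_perm D (Equiv.swap i i') (g := gdel f i) (B1_gdel f hfmeas i).1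
  rw [h]
  rw [show (fun s : Fin n → S => gdel f i (fun i'' => s (Equiv.swap i i' i'')))
    = gdel f (Equiv.swap i i' i) from gdel_comp_perm f hequiv (Equiv.swap i i') i]
  rw [Equiv.swap_apply_left]

omit [MeasurableSpace S] in
lemma swap_stabilizes {W : Finset (Fin n)} {a b : Fin n} (hab : (a ∈ W) ↔ (b ∈ W)) :
    ∀ i, i ∈ W ↔ Equiv.swap a b i ∈ W := by
  intro i
  rcases eq_or_ne i a with rfl | hia
  · rw [Equiv.swap_apply_left]; exact hab
  rcases eq_or_ne i b with rfl | hib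
  · rw [Equiv.swap_apply_right]; exact hab.symm
  · rw [Equiv.swap_apply_of_ne_of_ne hia hib]

end Selection
lemma pair_integral_eq (f : (Fin n → S) → Option (Fin n))
    (hfmeas : ∀ o : Option (Fin n), MeasurableSet {s : Fin n → S | f s = o})
    (hequiv : PermEquivariant f) {W : Finset (Fin n)} {j k j' k' : Fin n}
    (hj : j ∈ W) (hj' : j' ∈ W) (hk : k ∉ W) (hk' : k' ∉ W) :
    ∫ s, phi D W (gdel f j') s * phi D W (gdel f k') s ∂(Measure.pi fun _ : Fin n => D)
      = ∫ s, phi D W (gdel f j) s * phi D W (gdel f k) s ∂(Measure.pi fun _ : Fin n => D) := by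
  set σ : Equiv.Perm (Fin n) := (Equiv.swap j j').trans (Equiv.swap k k') with hσ
  have hσW : ∀ i, i ∈ W ↔ σ i ∈ W := by
    intro i
    rw [hσ]
    simp only [Equiv.trans_apply]
    exact (swap_stabilizes (iff_of_true hj hj') i).trans
      (swap_stabilizes (iff_of_false hk hk') _)
  have hjk' : j ≠ k := fun h => hk (h ▸ hj)
  have hjk'' : j ≠ k' := fun h => hk' (h ▸ hj)
  have hk'j : k' ≠ j := fun h => hk' (h ▸ hj)
  have hk'j' : k' ≠ j' := fun h => hk' (h ▸ hj')
  have hσj' : σ j' = j := by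
    rw [hσ]
    simp only [Equiv.trans_apply, Equiv.swap_apply_right]
    exact Equiv.swap_apply_of_ne_of_ne hjk' hjk''
  have hσk' : σ k' = k := by
    rw [hσ]
    simp only [Equiv.trans_apply]
    rw [Equiv.swap_apply_of_ne_of_ne hk'j hk'j', Equiv.swap_apply_right]
  have hmeasP : Measurable (fun s => phi D W (gdel f j') s * phi D W (gdel f k') s) :=
    ((B1.phi D W (B1_gdel f hfmeas j')).1).mul ((B1.phi D W (B1_gdel f hfmeas k')).1)
  rw [integral_perm D σ hmeasP]
  refine integral_congr_ae (Filter.Eventually.of_forall fun s => ?_)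
  show phi D W (gdel f j') (fun i => s (σ i)) * phi D W (gdel f k') (fun i => s (σ i))
    = phi D W (gdel f j) s * phi D W (gdel f k) s
  rw [phi_perm D W σ hσW (B1_gdel f hfmeas j').1 s,
    phi_perm D W σ hσW (B1_gdel f hfmeas k').1 s,
    gdel_comp_perm f hequiv σ j', gdel_comp_perm f hequiv σ k', hσj', hσk']

end CrossAux

open CrossAux

/-- Lemma 5.4 (abstracted): cross-term bound for the windowed estimators of two distinct
vertices `j ∈ A`, `k ∈ B` with `W = A ∩ B`.
(i) If `j ∈ W`, `k ∉ W` and `|W| = ℓ ≥ 1`, then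
`E[X_j^A · X_k^B] ≤ E[Q_W(1 − Q_W)] / (ℓ(n−ℓ))`.
(ii) If `W = ∅`, then `E[X_j^A · X_k^B] = μ²/n²` where `μ = P[f(t) ≠ ⊥]`. -/
theorem windowed_estimator_cross_term
    {S : Type*} [MeasurableSpace S] (n : ℕ)
    (D : Measure S) [IsProbabilityMeasure D]
    (f : (Fin n → S) → Option (Fin n))
    (hfmeas : ∀ o : Option (Fin n), MeasurableSet {s : Fin n → S | f s = o})
    (hequiv : PermEquivariant f)
    (j k : Fin n) (hjk : j ≠ k)
    (A B W : Finset (Fin n)) (hjA : j ∈ A) (hkB : k ∈ B) (hW : W = A ∩ B) :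
    ((j ∈ W → k ∉ W → 1 ≤ W.card →
      ∫ s, Xwin D n f j A s * Xwin D n f k B s ∂(Measure.pi fun _ : Fin n => D)
        ≤ (∫ s, Qwin D n f W s * (1 - Qwin D n f W s) ∂(Measure.pi fun _ : Fin n => D))
            / (W.card * ((n : ℝ) - W.card))) ∧
     (W = ∅ →
      ∫ s, Xwin D n f j A s * Xwin D n f k B s ∂(Measure.pi fun _ : Fin n => D)
        = ((Measure.pi (fun _ : Fin n => D)) {s | f s ≠ none}).toReal ^ 2 / n ^ 2)) := by
  classical
  have hn : 0 < n := j.pos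
  have hgj : B1 (n := n) (gdel f j) := B1_gdel f hfmeas j
  have hgk : B1 (n := n) (gdel f k) := B1_gdel f hfmeas k
  have hXA : Xwin D n f j A =ᵐ[Measure.pi fun _ : Fin n => D] phi D A (gdel f j) :=
    condexp_eq_phi D A hgj
  have hXB : Xwin D n f k B =ᵐ[Measure.pi fun _ : Fin n => D] phi D B (gdel f k) :=
    condexp_eq_phi D B hgk
  have hLHS : ∫ s, Xwin D n f j A s * Xwin D n f k B s ∂(Measure.pi fun _ : Fin n => D)
      = ∫ s, phi D W (gdel f j) s * phi D W (gdel f k) s ∂(Measure.pi fun _ : Fin n => D) := by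
    have h1 : ∫ s, Xwin D n f j A s * Xwin D n f k B s ∂(Measure.pi fun _ : Fin n => D)
        = ∫ s, phi D A (gdel f j) s * phi D B (gdel f k) s
            ∂(Measure.pi fun _ : Fin n => D) :=
      integral_congr_ae (hXA.mul hXB)
    have h2 := core_identity (A := A) (B := B) D hgj hgk
    rw [← hW] at h2
    exact h1.trans h2
  constructor
  · -- Part (i)
    intro hjW hkW hcard
    have hq : B1 (n := n) (qind f W) := B1_qind f hfmeas W
    have hq' : B1 (n := n) (qind f (Finset.univ \ W)) := B1_qind f hfmeas _
    have hqphi : B1 (n := n) (phi D W (qind f W)) := B1.phi D W hq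
    have hq'phi : B1 (n := n) (phi D W (qind f (Finset.univ \ W))) := B1.phi D W hq'
    have hQ : Qwin D n f W =ᵐ[Measure.pi fun _ : Fin n => D] phi D W (qind f W) :=
      condexp_eq_phi D W hq
    have hRHS : ∫ s, Qwin D n f W s * (1 - Qwin D n f W s) ∂(Measure.pi fun _ : Fin n => D)
        = ∫ s, phi D W (qind f W) s * (1 - phi D W (qind f W) s)
            ∂(Measure.pi fun _ : Fin n => D) :=
      integral_congr_ae (hQ.mul ((Filter.EventuallyEq.refl _ _).sub hQ))
    set I := ∫ s, phi D W (gdel f j) s * phi D W (gdel f k) s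
      ∂(Measure.pi fun _ : Fin n => D) with hI
    -- pointwise sum expansions
    have hqsum : ∀ s, phi D W (qind f W) s = ∑ j' ∈ W, phi D W (gdel f j') s := by
      intro s
      calc phi D W (qind f W) s
          = ∫ u, ∑ j' ∈ W, gdel f j' (wmerge W s u) ∂(Measure.pi fun _ : Fin n => D) :=
            integral_congr_ae (Filter.Eventually.of_forall fun u => (sum_gdel f W _).symm)
        _ = ∑ j' ∈ W, ∫ u, gdel f j' (wmerge W s u) ∂(Measure.pi fun _ : Fin n => D) :=
            integral_finset_sum W (f := fun j' u => gdel f j' (wmerge W s u)) fun j' _ =>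
              integrable_of_bdd (g := fun u => gdel f j' (wmerge W s u)) _
                ((B1_gdel f hfmeas j').1.comp (measurable_wmerge_right W s))
                fun u => (B1_gdel f hfmeas j').2 _
        _ = ∑ j' ∈ W, phi D W (gdel f j') s := rfl
    have hq'sum : ∀ s, phi D W (qind f (Finset.univ \ W)) s
        = ∑ k' ∈ Finset.univ \ W, phi D W (gdel f k') s := by
      intro s
      calc phi D W (qind f (Finset.univ \ W)) s
          = ∫ u, ∑ k' ∈ Finset.univ \ W, gdel f k' (wmerge W s u)
              ∂(Measure.pi fun _ : Fin n => D) :=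
            integral_congr_ae (Filter.Eventually.of_forall fun u =>
              (sum_gdel f (Finset.univ \ W) _).symm)
        _ = ∑ k' ∈ Finset.univ \ W, ∫ u, gdel f k' (wmerge W s u)
              ∂(Measure.pi fun _ : Fin n => D) :=
            integral_finset_sum (Finset.univ \ W)
              (f := fun k' u => gdel f k' (wmerge W s u)) fun k' _ =>
              integrable_of_bdd (g := fun u => gdel f k' (wmerge W s u)) _
                ((B1_gdel f hfmeas k').1.comp (measurable_wmerge_right W s))
                fun u => (B1_gdel f hfmeas k').2 _
        _ = ∑ k' ∈ Finset.univ \ W, phi D W (gdel f k') s := rfl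
    have hintpair : ∀ (a b : Fin n), Integrable
        (fun s => phi D W (gdel f a) s * phi D W (gdel f b) s)
        (Measure.pi fun _ : Fin n => D) :=
      fun a b => B1.integrable D ((B1.phi D W (B1_gdel f hfmeas a)).mul
        (B1.phi D W (B1_gdel f hfmeas b)))
    have hfactor : ∫ s, phi D W (qind f W) s * phi D W (qind f (Finset.univ \ W)) s
        ∂(Measure.pi fun _ : Fin n => D)
        = ((W.card : ℝ) * ((Finset.univ \ W).card : ℝ)) * I := by
      calc ∫ s, phi D W (qind f W) s * phi D W (qind f (Finset.univ \ W)) s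
            ∂(Measure.pi fun _ : Fin n => D)
          = ∫ s, ∑ j' ∈ W, ∑ k' ∈ Finset.univ \ W,
              phi D W (gdel f j') s * phi D W (gdel f k') s
              ∂(Measure.pi fun _ : Fin n => D) := by
            refine integral_congr_ae (Filter.Eventually.of_forall fun s => ?_)
            dsimp only
            rw [hqsum s, hq'sum s, Finset.sum_mul_sum]
        _ = ∑ j' ∈ W, ∑ k' ∈ Finset.univ \ W,
              ∫ s, phi D W (gdel f j') s * phi D W (gdel f k') s
              ∂(Measure.pi fun _ : Fin n => D) := by
            rw [integral_finset_sum W fun j' _ =>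
              integrable_finset_sum _ fun k' _ => hintpair j' k']
            exact Finset.sum_congr rfl fun j' _ =>
              integral_finset_sum _ fun k' _ => hintpair j' k'
        _ = ∑ j' ∈ W, ∑ k' ∈ Finset.univ \ W, I := by
            refine Finset.sum_congr rfl fun j' hj' => Finset.sum_congr rfl fun k' hk' => ?_
            exact pair_integral_eq D f hfmeas hequiv hjW hj' hkW (Finset.mem_sdiff.1 hk').2
        _ = ((W.card : ℝ) * ((Finset.univ \ W).card : ℝ)) * I := by
            simp [Finset.sum_const, nsmul_eq_mul]
            ring
    have hqnonneg : ∀ s, 0 ≤ phi D W (qind f W) s := by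
      intro s
      refine phi_nonneg D W (fun x => ?_) s
      unfold qind
      split_ifs <;> norm_num
    have hq'le : ∀ s, phi D W (qind f (Finset.univ \ W)) s ≤ 1 - phi D W (qind f W) s := by
      intro s
      have hle : (∫ u, qind f (Finset.univ \ W) (wmerge W s u) ∂(Measure.pi fun _ : Fin n => D))
          ≤ ∫ u, (1 - qind f W (wmerge W s u)) ∂(Measure.pi fun _ : Fin n => D) := by
        refine integral_mono (integrable_of_bdd _
          (hq'.1.comp (measurable_wmerge_right W s)) fun u => hq'.2 _) ?_
          fun u => qind_compl_le f W _
        exact (integrable_const 1).sub (integrable_of_bdd _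
          (hq.1.comp (measurable_wmerge_right W s)) fun u => hq.2 _)
      have heq : (∫ u, (1 - qind f W (wmerge W s u)) ∂(Measure.pi fun _ : Fin n => D))
          = 1 - phi D W (qind f W) s := by
        rw [integral_sub (integrable_const 1)
          (integrable_of_bdd (g := fun u => qind f W (wmerge W s u)) _
            (hq.1.comp (measurable_wmerge_right W s)) fun u => hq.2 _)]
        simp [phi]
      exact le_of_le_of_eq hle heq
    have hmono : ∫ s, phi D W (qind f W) s * phi D W (qind f (Finset.univ \ W)) s
        ∂(Measure.pi fun _ : Fin n => D)
        ≤ ∫ s, phi D W (qind f W) s * (1 - phi D W (qind f W) s)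
        ∂(Measure.pi fun _ : Fin n => D) := by
      refine integral_mono (B1.integrable D (hqphi.mul hq'phi)) ?_ fun s => ?_
      · exact ((B1.integrable D hqphi).sub (B1.integrable D (hqphi.mul hqphi))).congr
          (Filter.Eventually.of_forall fun s => by simp only [Pi.sub_apply]; ring)
      · exact mul_le_mul_of_nonneg_left (hq'le s) (hqnonneg s)
    -- cardinalities
    have hcardle : W.card ≤ n := by
      have := Finset.card_le_univ W
      simpa using this
    have hcardlt : W.card < n := by
      have hss : W ⊂ Finset.univ := by
        refine Finset.ssubset_univ_iff.2 fun huniv => ?_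
        exact hkW (huniv ▸ Finset.mem_univ k)
      have := Finset.card_lt_card hss
      simpa using this
    have hcard2 : ((Finset.univ \ W).card : ℝ) = (n : ℝ) - W.card := by
      rw [Finset.card_sdiff_of_subset (Finset.subset_univ W), Finset.card_univ, Fintype.card_fin,
        Nat.cast_sub hcardle]
    have hpos : 0 < (W.card : ℝ) * ((n : ℝ) - W.card) := by
      refine mul_pos ?_ ?_
      · exact_mod_cast hcard
      · have : (W.card : ℝ) < n := by exact_mod_cast hcardlt
        linarith
    rw [hLHS, hRHS, le_div_iff₀ hpos]
    rw [hcard2] at hfactor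
    nlinarith [hmono, hfactor]
  · -- Part (ii)
    intro hWe
    rw [hLHS, hWe]
    have hphi0 : ∀ (g : (Fin n → S) → ℝ) (s : Fin n → S),
        phi D (∅ : Finset (Fin n)) g s = ∫ x, g x ∂(Measure.pi fun _ : Fin n => D) := by
      intro g s
      show (∫ u, g (wmerge ∅ s u) ∂(Measure.pi fun _ : Fin n => D)) = _
      simp only [wmerge_empty]
    have hconst : ∫ s, phi D (∅ : Finset (Fin n)) (gdel f j) s
        * phi D (∅ : Finset (Fin n)) (gdel f k) s ∂(Measure.pi fun _ : Fin n => D)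
        = (∫ x, gdel f j x ∂(Measure.pi fun _ : Fin n => D))
          * ∫ x, gdel f k x ∂(Measure.pi fun _ : Fin n => D) := by
      have : ∀ s : Fin n → S, phi D (∅ : Finset (Fin n)) (gdel f j) s
          * phi D (∅ : Finset (Fin n)) (gdel f k) s
          = (∫ x, gdel f j x ∂(Measure.pi fun _ : Fin n => D))
            * ∫ x, gdel f k x ∂(Measure.pi fun _ : Fin n => D) := by
        intro s; rw [hphi0, hphi0]
      rw [integral_congr_ae (Filter.Eventually.of_forall this)]
      simp
    rw [hconst]
    have hall : ∀ i : Fin n, ∫ s, gdel f i s ∂(Measure.pi fun _ : Fin n => D)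
        = ∫ s, gdel f j s ∂(Measure.pi fun _ : Fin n => D) :=
      fun i => integral_gdel_eq D f hfmeas hequiv i j
    have hT : (n : ℝ) * ∫ s, gdel f j s ∂(Measure.pi fun _ : Fin n => D)
        = ((Measure.pi fun _ : Fin n => D) {s | f s ≠ none}).toReal := by
      have h1 : ∑ i : Fin n, ∫ s, gdel f i s ∂(Measure.pi fun _ : Fin n => D)
          = ∫ s, ∑ i : Fin n, gdel f i s ∂(Measure.pi fun _ : Fin n => D) :=
        (integral_finset_sum Finset.univ fun i _ => B1.integrable D (B1_gdel f hfmeas i)).symm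
      have h2 : ∫ s, ∑ i : Fin n, gdel f i s ∂(Measure.pi fun _ : Fin n => D)
          = ((Measure.pi fun _ : Fin n => D) {s | f s ≠ none}).toReal := by
        have hset : MeasurableSet {s : Fin n → S | f s ≠ none} := (hfmeas none).compl
        have heq2 : (fun s : Fin n → S => ∑ i : Fin n, gdel f i s)
            = Set.indicator {s : Fin n → S | f s ≠ none} (fun _ => (1 : ℝ)) := by
          funext s
          rw [sum_gdel_univ]
          by_cases h : f s = none <;> simp [Set.indicator_apply, h]
        rw [heq2, integral_indicator_const _ hset]
        simp [Measure.real]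
      have h3 : ∑ i : Fin n, ∫ s, gdel f i s ∂(Measure.pi fun _ : Fin n => D)
          = (n : ℝ) * ∫ s, gdel f j s ∂(Measure.pi fun _ : Fin n => D) := by
        rw [Finset.sum_congr rfl fun i _ => hall i]
        simp [Finset.sum_const, nsmul_eq_mul]
      rw [← h3, h1, h2]
    have hn0 : (n : ℝ) ≠ 0 := Nat.cast_ne_zero.2 hn.ne'
    rw [hall k, eq_div_iff (pow_ne_zero 2 hn0), ← hT]
    ring
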